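/- Assume f is twice differentiable, satisfies the Taylor gradient bound with constant L_H > 0, and ‖∇²f(z)‖_op ≤ U for all z ∈ ℝⁿ. Let x* ∈ ℝⁿ with g(x*) = 0, let x ∈ ℝⁿ, and let t > 0. Then ‖P_t(x) − x*‖ ≤ (1/t)·‖∇f(x) − ∇f(x*) + t·(x* − x)‖ ≤ (L_H/(2t))·‖x − x*‖² + ((U + t)/t)·‖x − x*‖, and consequently ‖x − P_t(x)‖ ≤ (L_H/(2t))·‖x − x*‖² + (U/t + 2)·‖x − x*‖. -/

import Mathlib

open scoped RealInnerProductSpace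

noncomputable section

/-- `ℝⁿ` with the Euclidean norm. -/
abbrev E (n : ℕ) := EuclideanSpace ℝ (Fin n)

/-- The vector `g(x)` measuring first-order stationarity of `f + lam‖·‖₁`. -/
def gvec (n : ℕ) (f : E n → ℝ) (lam : ℝ) (x : E n) : E n := WithLp.toLp 2 fun i =>
  if 0 < x i then gradient f x i + lam
  else if x i < 0 then gradient f x i - lam
  else gradient f x i - min (max (-lam) (gradient f x i)) lam

/-- The proximal-gradient residual `G_t(x) = t (x - prox_{(lam/t)‖·‖₁}(x - ∇f(x)/t))`. -/
def Gres (n : ℕ) (f : E n → ℝ) (lam t : ℝ) (x : E n) : E n := WithLp.toLp 2 fun i =>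
  if (gradient f x i + lam) / t < x i then gradient f x i + lam
  else if x i < (gradient f x i - lam) / t then gradient f x i - lam
  else t * x i

/-- The proximal-gradient update `P_t(x) = prox_{(lam/t)‖·‖₁}(x - ∇f(x)/t)` (soft-thresholding). -/
def Pt (n : ℕ) (f : E n → ℝ) (lam t : ℝ) (x : E n) : E n := WithLp.toLp 2 fun i =>
  if lam / t < x i - gradient f x i / t then x i - gradient f x i / t - lam / t
  else if x i - gradient f x i / t < -(lam / t) then x i - gradient f x i / t + lam / t
  else 0

/-- The objective `φ(x) = f(x) + lam ‖x‖₁`. -/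
def phi (n : ℕ) (f : E n → ℝ) (lam : ℝ) (x : E n) : ℝ := f x + lam * ∑ i, |x i|

/-- The Hessian of `f` at `x`, as a continuous linear map. -/
def hess (n : ℕ) (f : E n → ℝ) (x : E n) : E n →L[ℝ] E n := fderiv ℝ (gradient f) x

/-- The scaling map `S_{x,ε}`: identity on coordinates with `|x_i| > √ε`, multiplication by
`x_i` on the others. -/
def Smap (n : ℕ) (x : E n) (eps : ℝ) (u : E n) : E n := WithLp.toLp 2 fun i =>
  if Real.sqrt eps < |x i| then u i else x i * u i

/-- The relaxed first-order residual vector `g^ε(x)`. -/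
def gveps (n : ℕ) (f : E n → ℝ) (lam eps : ℝ) (x : E n) : E n := WithLp.toLp 2 fun i =>
  if Real.sqrt eps < x i then gradient f x i + lam
  else if x i < -Real.sqrt eps then gradient f x i - lam
  else gradient f x i -
    min (max (-(lam + eps ^ ((3:ℝ)/4))) (gradient f x i)) (lam + eps ^ ((3:ℝ)/4))

/-- Error bound for the proximal-gradient update against a stationary point
`x*` of `φ`: `‖P_t(x) - x*‖ ≤ (1/t)‖∇f(x) - ∇f(x*) + t(x* - x)‖
≤ (L_H/(2t))‖x - x*‖² + ((U + t)/t)‖x - x*‖`, and consequently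
`‖x - P_t(x)‖ ≤ (L_H/(2t))‖x - x*‖² + (U/t + 2)‖x - x*‖`. -/

lemma soft_lip (c a b : ℝ) (hc : 0 ≤ c) :
    |(if c < a then a - c else if a < -c then a + c else 0) -
      (if c < b then b - c else if b < -c then b + c else 0)| ≤ |a - b| := by
  have h1 := le_abs_self (a - b)
  have h2 := neg_abs_le (a - b)
  split_ifs <;>
    (try push_neg at *) <;> rw [abs_sub_le_iff] <;> exact ⟨by linarith, by linarith⟩

lemma norm_le_of_abs_le' {n : ℕ} (u v : E n) (h : ∀ i, |u i| ≤ |v i|) : ‖u‖ ≤ ‖v‖ := by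
  rw [EuclideanSpace.norm_eq, EuclideanSpace.norm_eq]
  apply Real.sqrt_le_sqrt
  apply Finset.sum_le_sum
  intro i _
  rw [Real.norm_eq_abs, Real.norm_eq_abs]
  exact pow_le_pow_left₀ (abs_nonneg _) (h i) 2

lemma soft_fix (t lam s g : ℝ) (ht : 0 < t) (hlam : 0 < lam)
    (hpos : 0 < s → g = -lam) (hneg : s < 0 → g = lam) (hzero : s = 0 → |g| ≤ lam) :
    (if lam / t < s - g / t then s - g / t - lam / t
      else if s - g / t < -(lam / t) then s - g / t + lam / t else 0) = s := by
  have hlt : 0 < lam / t := div_pos hlam ht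
  rcases lt_trichotomy s 0 with hs | hs | hs
  · rw [hneg hs, if_neg (by push_neg; linarith), if_pos (by linarith)]
    ring
  · have hb := abs_le.mp (hzero hs)
    have d1 : g / t ≤ lam / t := by gcongr; exact hb.2
    have d2 : -(lam / t) ≤ g / t := by rw [← neg_div]; gcongr; exact hb.1
    rw [hs, if_neg (by push_neg; linarith), if_neg (by push_neg; linarith)]
  · rw [hpos hs]
    rw [neg_div, sub_neg_eq_add, if_pos (by linarith)]
    ring

theorem stmt16 {n : ℕ} (f : E n → ℝ) (hf1 : Differentiable ℝ f)
    (hf2 : Differentiable ℝ (gradient f)) (lam : ℝ) (hlam : 0 < lam)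
    (LH : ℝ) (hLH : 0 < LH)
    (htaylor : ∀ x y : E n,
      ‖gradient f y - gradient f x - hess n f x (y - x)‖ ≤ LH / 2 * ‖y - x‖ ^ 2)
    (U : ℝ) (hU : ∀ z : E n, ‖hess n f z‖ ≤ U)
    (xstar : E n) (hstar : gvec n f lam xstar = 0)
    (x : E n) (t : ℝ) (ht : 0 < t) :
    ‖Pt n f lam t x - xstar‖ ≤
        1 / t * ‖gradient f x - gradient f xstar + t • (xstar - x)‖ ∧
    1 / t * ‖gradient f x - gradient f xstar + t • (xstar - x)‖ ≤
        LH / (2 * t) * ‖x - xstar‖ ^ 2 + (U + t) / t * ‖x - xstar‖ ∧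
    ‖x - Pt n f lam t x‖ ≤
        LH / (2 * t) * ‖x - xstar‖ ^ 2 + (U / t + 2) * ‖x - xstar‖ := by
  set H := hess n f xstar with hH
  set v := gradient f x - gradient f xstar + t • (xstar - x) with hv
  set r := ‖x - xstar‖ with hr
  -- fixed point property
  have hfix : ∀ i, Pt n f lam t xstar i = xstar i := by
    intro i
    have hg : gvec n f lam xstar i = 0 := by rw [hstar]; rfl
    unfold gvec at hg
    simp only [WithLp.ofLp_toLp] at hg
    simp only [Pt, WithLp.ofLp_toLp]
    show (if lam / t < xstar i - gradient f xstar i / t then _ else _) = xstar i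
    apply soft_fix t lam (xstar i) (gradient f xstar i) ht hlam
    · intro h; rw [if_pos h] at hg; linarith
    · intro h; rw [if_neg (by push_neg; linarith), if_pos h] at hg; linarith
    · intro h
      rw [if_neg (by push_neg; linarith), if_neg (by push_neg; linarith)] at hg
      have heq : gradient f xstar i = min (max (-lam) (gradient f xstar i)) lam := by linarith
      rw [abs_le]
      constructor
      · rw [heq]; exact le_min (le_max_left _ _) (by linarith)
      · rw [heq]; exact min_le_right _ _
  -- componentwise nonexpansiveness
  have hw : ∀ i, |(Pt n f lam t x - xstar) i| ≤
      |((x - xstar) - (1/t) • (gradient f x - gradient f xstar)) i| := by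
    intro i
    have hkey : (Pt n f lam t x - xstar) i = Pt n f lam t x i - Pt n f lam t xstar i := by
      simp [hfix i]
    rw [hkey]
    simp only [Pt, WithLp.ofLp_toLp]
    have hc : (0:ℝ) ≤ lam / t := le_of_lt (div_pos hlam ht)
    have := soft_lip (lam / t) (x i - gradient f x i / t)
      (xstar i - gradient f xstar i / t) hc
    refine le_trans this (le_of_eq ?_)
    congr 1
    simp only [PiLp.sub_apply, PiLp.smul_apply, smul_eq_mul]
    field_simp
    ring
  have hnorm1 : ‖Pt n f lam t x - xstar‖ ≤
      ‖(x - xstar) - (1/t) • (gradient f x - gradient f xstar)‖ :=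
    norm_le_of_abs_le' _ _ hw
  have hveq : v = -(t • ((x - xstar) - (1/t) • (gradient f x - gradient f xstar))) := by
    rw [hv]
    match_scalars <;> field_simp
  have hnv : ‖(x - xstar) - (1/t) • (gradient f x - gradient f xstar)‖ = 1 / t * ‖v‖ := by
    rw [hveq, norm_neg, norm_smul, Real.norm_eq_abs, abs_of_pos ht]
    field_simp
  have first : ‖Pt n f lam t x - xstar‖ ≤ 1 / t * ‖v‖ := by rw [← hnv]; exact hnorm1
  -- second inequality
  have h1 := htaylor xstar x
  have h2 : ‖H (x - xstar)‖ ≤ U * r := by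
    refine le_trans (H.le_opNorm _) ?_
    exact mul_le_mul_of_nonneg_right (hU xstar) (norm_nonneg _)
  have h3 : ‖t • (xstar - x)‖ = t * r := by
    rw [norm_smul, Real.norm_eq_abs, abs_of_pos ht, hr, norm_sub_rev]
  have hv_le : ‖v‖ ≤ LH / 2 * r ^ 2 + (U + t) * r := by
    have hdecomp : v = (gradient f x - gradient f xstar - H (x - xstar)) + H (x - xstar)
        + t • (xstar - x) := by rw [hv]; abel
    calc ‖v‖ ≤ ‖gradient f x - gradient f xstar - H (x - xstar)‖ + ‖H (x - xstar)‖
          + ‖t • (xstar - x)‖ := by rw [hdecomp]; exact norm_add₃_le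
      _ ≤ LH / 2 * r ^ 2 + U * r + t * r := by
          rw [h3]; exact add_le_add (add_le_add h1 h2) le_rfl
      _ = LH / 2 * r ^ 2 + (U + t) * r := by ring
  have second : 1 / t * ‖v‖ ≤ LH / (2 * t) * r ^ 2 + (U + t) / t * r := by
    have := mul_le_mul_of_nonneg_left hv_le (le_of_lt (one_div_pos.mpr ht))
    calc 1 / t * ‖v‖ ≤ 1 / t * (LH / 2 * r ^ 2 + (U + t) * r) := this
      _ = LH / (2 * t) * r ^ 2 + (U + t) / t * r := by field_simp
  refine ⟨first, second, ?_⟩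
  have htri : ‖x - Pt n f lam t x‖ ≤ r + ‖Pt n f lam t x - xstar‖ := by
    have : x - Pt n f lam t x = (x - xstar) - (Pt n f lam t x - xstar) := by abel
    rw [this]
    exact norm_sub_le _ _
  have hUr : 0 ≤ U * r / t := by
    have hU0 : 0 ≤ U := le_trans (norm_nonneg _) (hU xstar)
    positivity
  have hfin : (U + t) / t * r + r = (U / t + 2) * r := by
    field_simp
    ring
  linarith [le_trans first second]
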